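/- Let n ≥ 4 and suppose that for every ordered pair (i, j) of distinct elements of Fin n we are given a weighted cubic tree M(i,j) whose leaves are labeled bijectively by the set Fin n \ {i, j}; write d^{(ij)}_{kl} for the distance in M(i,j) between the leaves labeled k and l. Assume the compatibility condition: for all pairwise distinct i, j, k, l in Fin n, the value d^{(ij)}_{kl} is invariant under every permutation of the four indices (i, j, k, l), i.e. d^{(ij)}_{kl} = d^{(ji)}_{kl} = d^{(ik)}_{jl} = d^{(il)}_{kj} = d^{(kl)}_{ij} = d^{(jl)}_{ik} = d^{(kj)}_{il}, etc. Then the matrix of trees is symmetric: for every pair of distinct i, j there is a graph isomorphism from M(i,j) to M(j,i) that preserves leaf labels and edge weights. -/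

import Mathlib

/-- A weighted cubic tree: a finite connected acyclic simple graph in which every vertex
has degree 1 or 3, with a strictly positive real weight on each edge. -/
structure WCubicTree where
  V : Type
  [fintypeV : Fintype V]
  [decEqV : DecidableEq V]
  G : SimpleGraph V
  [decAdj : DecidableRel G.Adj]
  connected : G.Connected
  acyclic : G.IsAcyclic
  cubic : ∀ v : V, G.degree v = 1 ∨ G.degree v = 3
  w : Sym2 V → ℝ
  w_pos : ∀ e ∈ G.edgeSet, 0 < w e

attribute [instance] WCubicTree.fintypeV WCubicTree.decEqV WCubicTree.decAdj

/-- A leaf is a vertex of degree 1. -/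
def WCubicTree.IsLeaf (T : WCubicTree) (v : T.V) : Prop := T.G.degree v = 1

/-- Some walk between two vertices, which exists by connectedness. -/
noncomputable def WCubicTree.walk (T : WCubicTree) (u v : T.V) : T.G.Walk u v :=
  Classical.choice (T.connected.preconnected u v)

/-- The distance between two vertices: the sum of the weights of the edges of the
(unique, by acyclicity) path joining them. -/
noncomputable def WCubicTree.dist (T : WCubicTree) (u v : T.V) : ℝ :=
  (((T.walk u v).toPath : T.G.Path u v).val.edges.map T.w).sum


namespace WCubicTree

variable (T : WCubicTree)

open SimpleGraph Walk

noncomputable def pw (u v : T.V) : T.G.Walk u v := ((T.walk u v).toPath : T.G.Path u v).1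

lemma pw_isPath (u v : T.V) : (T.pw u v).IsPath := ((T.walk u v).toPath : T.G.Path u v).2

lemma dist_def (u v : T.V) : T.dist u v = ((T.pw u v).edges.map T.w).sum := rfl

lemma dist_eq_of_isPath {u v : T.V} (p : T.G.Walk u v) (hp : p.IsPath) :
    T.dist u v = (p.edges.map T.w).sum := by
  have : (⟨p, hp⟩ : T.G.Path u v) = (T.walk u v).toPath := T.acyclic.path_unique _ _
  rw [dist_def]
  have : p = T.pw u v := by
    have := congrArg Subtype.val this
    simpa [pw] using this
  rw [this]

lemma dist_comm (u v : T.V) : T.dist u v = T.dist v u := by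
  rw [dist_def, T.dist_eq_of_isPath (T.pw u v).reverse (T.pw_isPath u v).reverse]
  simp [List.sum_reverse]

@[simp] lemma dist_self (u : T.V) : T.dist u u = 0 := by
  rw [T.dist_eq_of_isPath Walk.nil IsPath.nil]; simp

lemma dist_nonneg (u v : T.V) : 0 ≤ T.dist u v := by
  rw [dist_def]
  apply List.sum_nonneg
  intro x hx
  simp only [List.mem_map] at hx
  obtain ⟨e, he, rfl⟩ := hx
  exact (T.w_pos e ((T.pw u v).edges_subset_edgeSet he)).le

lemma dist_pos {u v : T.V} (h : u ≠ v) : 0 < T.dist u v := by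
  rw [dist_def]
  have hne : (T.pw u v).edges ≠ [] := by
    intro h0
    have hl : (T.pw u v).length = 0 := by
      have := congrArg List.length h0
      simpa [Walk.length_edges] using this
    exact h (Walk.eq_of_length_eq_zero hl)
  rcases List.exists_mem_of_ne_nil _ hne with ⟨e, he⟩
  have : ∀ x ∈ (T.pw u v).edges.map T.w, 0 < x := by
    intro x hx
    simp only [List.mem_map] at hx
    obtain ⟨e, he, rfl⟩ := hx
    exact T.w_pos e ((T.pw u v).edges_subset_edgeSet he)
  apply List.sum_pos _ this
  simp [hne]

lemma dist_eq_zero_iff {u v : T.V} : T.dist u v = 0 ↔ u = v := by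
  constructor
  · intro h0
    by_contra hne
    exact absurd h0 (T.dist_pos hne).ne'
  · rintro rfl; simp

lemma dist_adj {u v : T.V} (h : T.G.Adj u v) : T.dist u v = T.w s(u, v) := by
  have hp : (Walk.cons h Walk.nil).IsPath := by simp [h.ne]
  rw [T.dist_eq_of_isPath _ hp]; simp

lemma B_of_mem_support {u v z : T.V} {p : T.G.Walk u v} (hp : p.IsPath) (hz : z ∈ p.support) :
    T.dist u z + T.dist z v = T.dist u v := by
  rw [T.dist_eq_of_isPath _ hp, ← Walk.take_spec p hz, Walk.edges_append,
    T.dist_eq_of_isPath _ (hp.takeUntil hz), T.dist_eq_of_isPath _ (hp.dropUntil hz)]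
  simp


section append

variable {T}

lemma isPath_append {u v x : T.V} {p : T.G.Walk u v} {q : T.G.Walk v x}
    (hp : p.IsPath) (hq : q.IsPath) (hint : ∀ z ∈ p.support, z ∈ q.support → z = v) :
    (p.append q).IsPath := by
  rw [Walk.isPath_def, Walk.support_append]
  have h2 : q.support.Nodup := hq.support_nodup
  have h2' : (v :: q.support.tail).Nodup := by rw [← q.support_eq_cons]; exact h2
  refine List.Nodup.append hp.support_nodup (List.nodup_cons.mp h2').2 ?_
  intro z hz1 hz2
  have hz2' : z ∈ q.support := List.mem_of_mem_tail hz2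
  have hzv : z = v := hint z hz1 hz2'
  subst hzv
  exact (List.nodup_cons.mp h2').1 hz2

lemma exists_split {u v : T.V} (p : T.G.Walk u v) :
    ∀ {x y : T.V} (q : T.G.Walk x y), q.IsPath → y ∈ p.support →
    ∃ (m : T.V) (q1 : T.G.Walk x m) (q2 : T.G.Walk m y),
      q = q1.append q2 ∧ q1.IsPath ∧ m ∈ p.support ∧
      (∀ z ∈ q1.support, z ∈ p.support → z = m) := by
  intro x y q
  induction q with
  | nil =>
    intro _ hy
    exact ⟨_, Walk.nil, Walk.nil, rfl, Walk.IsPath.nil, hy, by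
      intro z hz _; simpa using hz⟩
  | @cons a b c hadj q' ih =>
    intro hq hy
    by_cases ha : a ∈ p.support
    · exact ⟨a, Walk.nil, Walk.cons hadj q', rfl, Walk.IsPath.nil, ha, by
        intro z hz _; simpa using hz⟩
    · obtain ⟨m, q1, q2, heq, hq1, hm, hcond⟩ := ih hq.of_cons hy
      refine ⟨m, Walk.cons hadj q1, q2, by rw [Walk.cons_append, heq], ?_, hm, ?_⟩
      · refine hq1.cons ?_
        intro hmem
        have : a ∈ q'.support := by
          rw [heq, Walk.mem_support_append_iff]
          exact Or.inl hmem
        exact ((Walk.cons_isPath_iff _ _).mp hq).2 this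
      · intro z hz hzp
        rw [Walk.support_cons] at hz
        rcases List.mem_cons.mp hz with rfl | hz'
        · exact absurd hzp ha
        · exact hcond z hz' hzp

/-- Median existence. -/
lemma median (u v x : T.V) :
    ∃ m : T.V, m ∈ (T.pw u v).support ∧
      T.dist u m + T.dist m v = T.dist u v ∧
      T.dist x m + T.dist m u = T.dist x u ∧
      T.dist x m + T.dist m v = T.dist x v := by
  obtain ⟨m, q1, q2, heq, hq1, hm, hcond⟩ :=
    exists_split (T.pw u v) (T.pw x u) (T.pw_isPath x u) (T.pw u v).start_mem_support
  have hxu : T.dist x m + T.dist m u = T.dist x u := by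
    have : m ∈ (T.pw x u).support := by
      rw [heq, Walk.mem_support_append_iff]; exact Or.inl q1.end_mem_support
    exact T.B_of_mem_support (T.pw_isPath x u) this
  have hdrop := (T.pw_isPath u v).dropUntil hm
  have hxv : T.dist x m + T.dist m v = T.dist x v := by
    have hap : (q1.append ((T.pw u v).dropUntil m hm)).IsPath := by
      refine isPath_append hq1 hdrop ?_
      intro z hz1 hz2
      exact hcond z hz1 ((T.pw u v).support_dropUntil_subset hm hz2)
    have hmem : m ∈ (q1.append ((T.pw u v).dropUntil m hm)).support := by
      rw [Walk.mem_support_append_iff]; exact Or.inl q1.end_mem_support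
    exact T.B_of_mem_support hap hmem
  exact ⟨m, hm, T.B_of_mem_support (T.pw_isPath u v) hm, hxu, hxv⟩

lemma dist_triangle (u x v : T.V) : T.dist u v ≤ T.dist u x + T.dist x v := by
  obtain ⟨m, _, h1, h2, h3⟩ := T.median u v x
  have c1 := T.dist_comm u m
  have c2 := T.dist_comm u x
  linarith [T.dist_nonneg x m]

lemma mem_pw_iff {u v z : T.V} :
    z ∈ (T.pw u v).support ↔ T.dist u z + T.dist z v = T.dist u v := by
  constructor
  · exact fun hz => T.B_of_mem_support (T.pw_isPath u v) hz
  · intro hB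
    obtain ⟨m, hm, h1, h2, h3⟩ := T.median u v z
    have c1 := T.dist_comm u z
    have c2 := T.dist_comm z m
    have c3 := T.dist_comm u m
    have hz : T.dist m z = 0 := by linarith [T.dist_nonneg m z]
    rwa [show m = z from T.dist_eq_zero_iff.mp hz] at hm

lemma pw_eq_of_isPath {u v : T.V} (p : T.G.Walk u v) (hp : p.IsPath) : T.pw u v = p := by
  have := T.acyclic.path_unique ((T.walk u v).toPath) ⟨p, hp⟩
  simpa [pw] using congrArg Subtype.val this

lemma colinear {a b p q : T.V}
    (hp : T.dist a p + T.dist p b = T.dist a b)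
    (hq : T.dist a q + T.dist q b = T.dist a b) :
    T.dist p q = |T.dist a p - T.dist a q| := by
  rw [← T.mem_pw_iff] at hp hq
  have hsplit : q ∈ ((T.pw a b).takeUntil p hp).support ∨
      q ∈ ((T.pw a b).dropUntil p hp).support := by
    have hts := (T.pw a b).take_spec hp
    rw [← hts] at hq
    exact (Walk.mem_support_append_iff _ _).mp hq
  rcases hsplit with hmem | hmem
  · have hq' : q ∈ (T.pw a p).support := by
      rw [T.pw_eq_of_isPath _ ((T.pw_isPath a b).takeUntil hp)]; exact hmem
    have h1 : T.dist a q + T.dist q p = T.dist a p :=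
      T.B_of_mem_support (T.pw_isPath a p) hq'
    have c := T.dist_comm p q
    rw [abs_of_nonneg (by linarith [T.dist_nonneg q p])]
    linarith
  · have h1 : T.dist p q + T.dist q b = T.dist p b :=
      T.B_of_mem_support ((T.pw_isPath a b).dropUntil hp) hmem
    have h2 := T.B_of_mem_support (T.pw_isPath a b) hp
    have h3 := T.B_of_mem_support (T.pw_isPath a b) hq
    rw [abs_of_nonpos (by linarith [T.dist_nonneg p q])]
    linarith

end append

section structure_lemmas

variable {T}

lemma getVert_one_mem_support {x y : T.V} (s : T.G.Walk x y) : s.getVert 1 ∈ s.support := by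
  cases s with
  | nil => simp [Walk.getVert]
  | cons r p => rw [Walk.getVert_cons_succ]; simp

lemma getVert_one_takeUntil {x y z : T.V} (s : T.G.Walk x y) (hz : z ∈ s.support) (hne : z ≠ x) :
    (s.takeUntil z hz).getVert 1 = s.getVert 1 := by
  cases s with
  | nil =>
    rw [Walk.mem_support_nil_iff] at hz
    exact absurd hz hne
  | @cons _ b _ r p =>
    have hx : ¬ x = z := fun h => hne h.symm
    have : (Walk.cons r p).takeUntil z hz = Walk.cons r (p.takeUntil z (by
        rcases Walk.mem_support_iff _ |>.mp hz with h | h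
        · exact absurd h.symm hx
        · simpa using h)) := by
      conv_lhs => rw [Walk.takeUntil]
      rw [dif_neg hx]
    rw [this, Walk.getVert_cons_succ, Walk.getVert_cons_succ, Walk.getVert_zero, Walk.getVert_zero]

/-- Characterization of adjacency in terms of the metric. -/
lemma adj_iff_metric {u v : T.V} :
    T.G.Adj u v ↔ u ≠ v ∧
      ∀ z, T.dist u z + T.dist z v = T.dist u v → z = u ∨ z = v := by
  constructor
  · intro h
    refine ⟨h.ne, fun z hz => ?_⟩
    rw [← T.mem_pw_iff] at hz
    rw [T.pw_eq_of_isPath (Walk.cons h Walk.nil) (by simp [h.ne])] at hz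
    simpa using hz
  · rintro ⟨hne, hz⟩
    by_contra hadj
    have hnil : ¬ (T.pw u v).Nil := by
      intro h
      exact hne (Walk.eq_of_length_eq_zero (Walk.nil_iff_length_eq.mp h))
    have hadj1 : T.G.Adj u ((T.pw u v).getVert 1) := Walk.adj_snd hnil
    have hmem : (T.pw u v).getVert 1 ∈ (T.pw u v).support := getVert_one_mem_support _
    rcases hz _ (T.B_of_mem_support (T.pw_isPath u v) hmem) with h1 | h1
    · exact hadj1.ne' h1
    · rw [h1] at hadj1
      exact hadj hadj1

/-- In a path ending at `u`, at most one neighbor of `u` can occur; with degree 3 there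
is a neighbor avoiding the path. -/
lemma exists_neighbor_notin {v u : T.V} (p : T.G.Walk v u) (hp : p.IsPath)
    (hdeg : T.G.degree u = 3) :
    ∃ u', T.G.Adj u u' ∧ u' ∉ p.support := by
  by_contra hc
  push_neg at hc
  have key : ∀ z, T.G.Adj u z → z ∈ p.support → z = p.reverse.getVert 1 := by
    intro z hadj hmem
    have hmem' : z ∈ p.reverse.support := by rwa [Walk.support_reverse, List.mem_reverse]
    have hzu : z ≠ u := hadj.ne'
    have heq : T.pw u z = p.reverse.takeUntil z hmem' :=
      T.pw_eq_of_isPath _ (hp.reverse.takeUntil hmem')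
    have heq2 : T.pw u z = Walk.cons hadj Walk.nil :=
      T.pw_eq_of_isPath _ (by simp [hadj.ne])
    have := getVert_one_takeUntil p.reverse hmem' hzu
    rw [← heq, heq2] at this
    simpa [Walk.getVert_cons_succ] using this
  have h2 : 1 < (T.G.neighborFinset u).card := by
    rw [SimpleGraph.card_neighborFinset_eq_degree, hdeg]; norm_num
  obtain ⟨a, ha, b, hb, hab⟩ := Finset.one_lt_card.mp h2
  rw [SimpleGraph.mem_neighborFinset] at ha hb
  exact hab ((key a ha (hc a ha)).trans (key b hb (hc b hb)).symm)

/-- Every path extends to a leaf. -/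
lemma extend_aux {v : T.V} :
    ∀ (k : ℕ) (u : T.V) (p : T.G.Walk v u), p.IsPath →
      Fintype.card T.V ≤ p.support.length + k →
      ∃ a, T.IsLeaf a ∧ T.dist v u + T.dist u a = T.dist v a := by
  intro k
  induction k with
  | zero =>
    intro u p hp hcard
    by_cases hl : T.IsLeaf u
    · exact ⟨u, hl, by simp⟩
    · exfalso
      have hdeg : T.G.degree u = 3 := (T.cubic u).resolve_left hl
      obtain ⟨u', hadj, hnotin⟩ := exists_neighbor_notin p hp hdeg
      apply hnotin
      have hnodup : p.support.Nodup := hp.support_nodup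
      have hlen : p.support.length ≤ Fintype.card T.V := by
        simpa using List.Nodup.length_le_card hnodup
      have hcard2 : p.support.toFinset = Finset.univ := by
        apply Finset.eq_univ_of_card
        rw [List.toFinset_card_of_nodup hnodup]
        omega
      rw [← List.mem_toFinset, hcard2]
      exact Finset.mem_univ _
  | succ k ih =>
    intro u p hp hcard
    by_cases hl : T.IsLeaf u
    · exact ⟨u, hl, by simp⟩
    · have hdeg : T.G.degree u = 3 := (T.cubic u).resolve_left hl
      obtain ⟨u', hadj, hnotin⟩ := exists_neighbor_notin p hp hdeg
      have hp' : (p.append (Walk.cons hadj Walk.nil)).IsPath := by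
        refine isPath_append hp (by simp [hadj.ne]) ?_
        intro z hz1 hz2
        have : z = u ∨ z = u' := by simpa using hz2
        rcases this with rfl | rfl
        · rfl
        · exact absurd hz1 hnotin
      obtain ⟨a, hla, hda⟩ := ih u' (p.append (Walk.cons hadj Walk.nil)) hp' (by
        have h1 : (p.append (Walk.cons hadj Walk.nil)).support.length = p.support.length + 1 := by
          rw [Walk.length_support, Walk.length_support, Walk.length_append]
          simp
        omega)
      have hB : T.dist v u + T.dist u u' = T.dist v u' := by
        refine T.B_of_mem_support hp' ?_
        rw [Walk.mem_support_append_iff]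
        exact Or.inl p.end_mem_support
      have t1 := T.dist_triangle u u' a
      have t2 := T.dist_triangle v u a
      exact ⟨a, hla, by linarith⟩

lemma leaf_beyond (v u : T.V) :
    ∃ a, T.IsLeaf a ∧ T.dist v u + T.dist u a = T.dist v a := by
  refine extend_aux (Fintype.card T.V) u (T.pw v u) (T.pw_isPath v u) ?_
  exact Nat.le_add_left _ _

lemma eq_of_leaf_profile {u v : T.V}
    (h : ∀ a, T.IsLeaf a → T.dist a u = T.dist a v) : u = v := by
  obtain ⟨a, hla, hB⟩ := T.leaf_beyond v u
  have := h a hla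
  have c1 := T.dist_comm a u
  have c2 := T.dist_comm a v
  have c3 := T.dist_comm v u
  have : T.dist u v = 0 := by linarith
  exact (T.dist_eq_zero_iff.mp (by rwa [T.dist_comm] at this)).symm

lemma getVert_one_pw_eq {v z a : T.V} (hzv : z ≠ v)
    (hB : T.dist v z + T.dist z a = T.dist v a) (hadj : T.G.Adj v z) :
    (T.pw v a).getVert 1 = z := by
  have hmem : z ∈ (T.pw v a).support := mem_pw_iff.mpr hB
  have h1 : T.pw v z = (T.pw v a).takeUntil z hmem :=
    T.pw_eq_of_isPath _ ((T.pw_isPath v a).takeUntil hmem)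
  have h2 : T.pw v z = Walk.cons hadj Walk.nil := T.pw_eq_of_isPath _ (by simp [hadj.ne])
  calc (T.pw v a).getVert 1 = ((T.pw v a).takeUntil z hmem).getVert 1 :=
        (getVert_one_takeUntil _ hmem hzv).symm
    _ = (T.pw v z).getVert 1 := by rw [h1]
    _ = z := by rw [h2, Walk.getVert_cons_succ, Walk.getVert_zero]

lemma pair_through {v a b xa xb : T.V}
    (ha : (T.pw v a).getVert 1 = xa) (hb : (T.pw v b).getVert 1 = xb) (hxab : xa ≠ xb) :
    T.dist a v + T.dist v b = T.dist a b := by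
  have hpath : ((T.pw v a).reverse.append (T.pw v b)).IsPath := by
    refine isPath_append (T.pw_isPath v a).reverse (T.pw_isPath v b) ?_
    intro z hz1 hz2
    rw [Walk.support_reverse, List.mem_reverse] at hz1
    by_contra hzv
    have e1 : T.pw v z = (T.pw v a).takeUntil z hz1 :=
      T.pw_eq_of_isPath _ ((T.pw_isPath v a).takeUntil hz1)
    have e2 : T.pw v z = (T.pw v b).takeUntil z hz2 :=
      T.pw_eq_of_isPath _ ((T.pw_isPath v b).takeUntil hz2)
    apply hxab
    calc xa = (T.pw v a).getVert 1 := ha.symm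
      _ = (T.pw v z).getVert 1 := by
          rw [e1]; exact (getVert_one_takeUntil _ hz1 hzv).symm
      _ = (T.pw v b).getVert 1 := by
          rw [e2]; exact getVert_one_takeUntil _ hz2 hzv
      _ = xb := hb
  refine T.B_of_mem_support hpath ?_
  rw [Walk.mem_support_append_iff]
  exact Or.inl (T.pw v a).reverse.end_mem_support

/-- Every internal vertex is the median of three leaves. -/
lemma internal_median {v : T.V} (hdeg : T.G.degree v = 3) :
    ∃ a b c, T.IsLeaf a ∧ T.IsLeaf b ∧ T.IsLeaf c ∧ a ≠ b ∧ a ≠ c ∧ b ≠ c ∧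
      T.dist a v + T.dist v b = T.dist a b ∧
      T.dist a v + T.dist v c = T.dist a c ∧
      T.dist b v + T.dist v c = T.dist b c := by
  have h3 : (T.G.neighborFinset v).card = 3 := by
    rw [SimpleGraph.card_neighborFinset_eq_degree, hdeg]
  obtain ⟨x1, x2, x3, h12, h13, h23, hset⟩ := Finset.card_eq_three.mp h3
  have hadj : ∀ x ∈ ({x1, x2, x3} : Finset T.V), T.G.Adj v x := by
    intro x hx
    rw [← hset] at hx
    exact (SimpleGraph.mem_neighborFinset _ _ _).mp hx
  have hadj1 : T.G.Adj v x1 := hadj x1 (by simp)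
  have hadj2 : T.G.Adj v x2 := hadj x2 (by simp)
  have hadj3 : T.G.Adj v x3 := hadj x3 (by simp)
  have step : ∀ (x : T.V), T.G.Adj v x →
      ∃ a, T.IsLeaf a ∧ T.dist v x + T.dist x a = T.dist v a ∧ (T.pw v a).getVert 1 = x := by
    intro x hx
    obtain ⟨a, hla, hBa⟩ := T.extend_aux (Fintype.card T.V) x (Walk.cons hx Walk.nil)
      (by simp [hx.ne]) (Nat.le_add_left _ _)
    exact ⟨a, hla, hBa, T.getVert_one_pw_eq hx.ne' hBa hx⟩
  obtain ⟨a, hla, hBa, hga⟩ := step x1 hadj1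
  obtain ⟨b, hlb, hBb, hgb⟩ := step x2 hadj2
  obtain ⟨c, hlc, hBc, hgc⟩ := step x3 hadj3
  have hab : T.dist a v + T.dist v b = T.dist a b := T.pair_through hga hgb h12
  have hac : T.dist a v + T.dist v c = T.dist a c := T.pair_through hga hgc h13
  have hbc : T.dist b v + T.dist v c = T.dist b c := T.pair_through hgb hgc h23
  have hvne : ∀ z, T.IsLeaf z → z ≠ v := by
    intro z hz hzeq
    rw [IsLeaf, hzeq, hdeg] at hz
    norm_num at hz
  have hdav : 0 < T.dist a v := by
    rw [T.dist_comm]; exact T.dist_pos (Ne.symm (hvne a hla))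
  have hdbv : 0 < T.dist b v := by
    rw [T.dist_comm]; exact T.dist_pos (Ne.symm (hvne b hlb))
  have hdvb : 0 < T.dist v b := T.dist_pos (hvne b hlb).symm
  have hdvc : 0 < T.dist v c := T.dist_pos (hvne c hlc).symm
  refine ⟨a, b, c, hla, hlb, hlc, ?_, ?_, ?_, hab, hac, hbc⟩
  · intro h; subst h
    rw [T.dist_self] at hab
    linarith
  · intro h; subst h
    rw [T.dist_self] at hac
    linarith
  · intro h; subst h
    rw [T.dist_self] at hbc
    linarith

/-- The profile formula: the distance from any vertex `z` to a point `m` between the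
leaves `a` and `b` is determined by `T.dist a m` and distances among `z, a, b`. -/
lemma profile_formula {a b m : T.V} (hB : T.dist a m + T.dist m b = T.dist a b) (z : T.V) :
    T.dist z m = (T.dist z a + T.dist z b - T.dist a b) / 2 +
      |(T.dist z a + T.dist a b - T.dist z b) / 2 - T.dist a m| := by
  obtain ⟨m', _, h1, h2, h3⟩ := T.median a b z
  -- h1 : d a m' + d m' b = d a b ; h2 : d z m' + d m' a = d z a ; h3 : d z m' + d m' b = d z b
  have c1 := T.dist_comm a m'
  have c2 := T.dist_comm m' a
  have hcol : T.dist m m' = |T.dist a m - T.dist a m'| := T.colinear hB h1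
  have t1 := T.dist_triangle z m' m
  have t2 := T.dist_triangle z m a
  have t3 := T.dist_triangle z m b
  have cm := T.dist_comm m' m
  have cma := T.dist_comm m a
  have cmb := T.dist_comm m b
  have e1 : (T.dist z a + T.dist z b - T.dist a b) / 2 = T.dist z m' := by linarith
  have e2 : (T.dist z a + T.dist a b - T.dist z b) / 2 = T.dist a m' := by linarith
  have key : T.dist z m = T.dist z m' + T.dist m m' := by
    rcases abs_cases (T.dist a m - T.dist a m') with ⟨he, hsign⟩ | ⟨he, hsign⟩ <;>
      rw [he] at hcol
    · -- d a m ≥ d a m' : lower bound via b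
      have lb : T.dist z b ≤ T.dist z m + T.dist m b := t3
      linarith
    · -- d a m ≤ d a m' : lower bound via a
      have lb : T.dist z a ≤ T.dist z m + T.dist m a := t2
      linarith
  rw [e1, e2, abs_sub_comm, ← hcol]
  exact key

/-- Collinear extension: if `u` is between `a` and `v`, and `v` is between `u` and `b`,
with `u ≠ v`, then `v` is between `a` and `b`. -/
lemma three_point {a u v b : T.V}
    (h1 : T.dist a u + T.dist u v = T.dist a v)
    (h2 : T.dist u v + T.dist v b = T.dist u b)
    (huv : u ≠ v) :
    T.dist a v + T.dist v b = T.dist a b := by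
  obtain ⟨m, _, e1, e2, e3⟩ := T.median a b v
  -- e1 : d a m + d m b = d a b ; e2 : d v m + d m a = d v a ; e3 : d v m + d m b = d v b
  have hmav : T.dist a m + T.dist m v = T.dist a v := by
    have := T.dist_comm v m
    have := T.dist_comm m a
    have := T.dist_comm a m
    linarith [T.dist_comm v m, T.dist_comm m a, T.dist_comm a v]
  have hcol : T.dist u m = |T.dist a u - T.dist a m| := T.colinear h1 hmav
  have t1 := T.dist_triangle u m b
  have hposs := T.dist_pos huv
  have cvm := T.dist_comm v m
  have cav := T.dist_comm a v
  have cmb := T.dist_comm m b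
  have cmv := T.dist_comm m v
  have hnn := T.dist_nonneg v m
  have hmv : T.dist m v = 0 := by
    rcases abs_cases (T.dist a u - T.dist a m) with ⟨he, hsign⟩ | ⟨he, hsign⟩ <;>
      rw [he] at hcol
    · -- d a m ≤ d a u : contradiction
      exfalso
      linarith
    · -- d a m ≥ d a u
      linarith
  have : m = v := T.dist_eq_zero_iff.mp hmv
  subst this
  linarith

end structure_lemmas

section reconstruction

variable {ι : Type} {T1 T2 : WCubicTree} {L1 : ι → T1.V} {L2 : ι → T2.V}

/-- Existence of a mirror vertex with the same leaf-distance profile. -/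
lemma exists_mirror
    (hsurj1 : ∀ v, T1.IsLeaf v → ∃ k, L1 k = v)
    (hleaf2 : ∀ k, T2.IsLeaf (L2 k))
    (hm : ∀ k l, T1.dist (L1 k) (L1 l) = T2.dist (L2 k) (L2 l)) :
    ∀ v : T1.V, ∃ m : T2.V, ∀ k, T2.dist (L2 k) m = T1.dist (L1 k) v := by
  clear hleaf2
  intro v
  rcases T1.cubic v with hdeg | hdeg
  · obtain ⟨k0, hk0⟩ := hsurj1 v hdeg
    exact ⟨L2 k0, fun k => by rw [← hk0, ← hm k k0]⟩
  · obtain ⟨a, b, c, hla, hlb, hlc, _, _, _, hab, hac, hbc⟩ := T1.internal_median hdeg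
    obtain ⟨ka, hka⟩ := hsurj1 a hla
    obtain ⟨kb, hkb⟩ := hsurj1 b hlb
    obtain ⟨kc, hkc⟩ := hsurj1 c hlc
    obtain ⟨m, _, m1, m2, m3⟩ := T2.median (L2 ka) (L2 kb) (L2 kc)
    -- abbreviations for leaf distances
    have Dab : T1.dist a b = T2.dist (L2 ka) (L2 kb) := by rw [← hka, ← hkb, hm]
    have Dac : T1.dist a c = T2.dist (L2 ka) (L2 kc) := by rw [← hka, ← hkc, hm]
    have Dbc : T1.dist b c = T2.dist (L2 kb) (L2 kc) := by rw [← hkb, ← hkc, hm]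
    -- Gromov products agree
    have g : T2.dist (L2 ka) m = T1.dist a v := by
      have c1 := T2.dist_comm (L2 kc) m
      have c2 := T2.dist_comm m (L2 ka)
      have c3 := T2.dist_comm m (L2 kb)
      have c4 := T2.dist_comm (L2 kc) (L2 ka)
      have c5 := T2.dist_comm (L2 kc) (L2 kb)
      have d1 := T1.dist_comm a v
      have d2 := T1.dist_comm b v
      have d3 := T1.dist_comm v b
      have d4 := T1.dist_comm v c
      linarith
    refine ⟨m, fun k => ?_⟩
    have p1 := T1.profile_formula hab (L1 k)
    have p2 := T2.profile_formula m1 (L2 k)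
    rw [p1, p2,
      show T1.dist (L1 k) a = T2.dist (L2 k) (L2 ka) from by rw [← hka, hm],
      show T1.dist (L1 k) b = T2.dist (L2 k) (L2 kb) from by rw [← hkb, hm],
      Dab, g.symm]

/-- A distance-expansion bound for profile-preserving maps. -/
lemma mirror_le
    (hsurj1 : ∀ v, T1.IsLeaf v → ∃ k, L1 k = v)
    (hm : ∀ k l, T1.dist (L1 k) (L1 l) = T2.dist (L2 k) (L2 l))
    (φ : T1.V → T2.V)
    (hφ : ∀ (v : T1.V) (k : ι), T2.dist (L2 k) (φ v) = T1.dist (L1 k) v) :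
    ∀ u v : T1.V, T1.dist u v ≤ T2.dist (φ u) (φ v) := by
  intro u v
  by_cases huv : u = v
  · subst huv
    rw [T1.dist_self]
    exact T2.dist_nonneg (φ u) (φ u)
  · obtain ⟨a, hla, hBa⟩ := T1.leaf_beyond v u
    obtain ⟨b, hlb, hBb⟩ := T1.leaf_beyond u v
    have hBa' : T1.dist a u + T1.dist u v = T1.dist a v := by
      have := T1.dist_comm v u
      have := T1.dist_comm u a
      have := T1.dist_comm v a
      have := T1.dist_comm a v
      have := T1.dist_comm u v
      linarith
    have h3p : T1.dist a v + T1.dist v b = T1.dist a b := T1.three_point hBa' hBb huv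
    obtain ⟨ka, hka⟩ := hsurj1 a hla
    obtain ⟨kb, hkb⟩ := hsurj1 b hlb
    have t1 := T2.dist_triangle (L2 ka) (φ u) (L2 kb)
    have t2 := T2.dist_triangle (φ u) (φ v) (L2 kb)
    have e1 : T2.dist (L2 ka) (φ u) = T1.dist a u := by rw [hφ u ka, hka]
    have e2 : T2.dist (L2 kb) (φ v) = T1.dist b v := by rw [hφ v kb, hkb]
    have e3 : T2.dist (L2 ka) (L2 kb) = T1.dist a b := by rw [← hm ka kb, hka, hkb]
    have c1 := T2.dist_comm (φ v) (L2 kb)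
    have c2 := T1.dist_comm b v
    have c3 := T1.dist_comm u v
    have c4 := T1.dist_comm v b
    linarith

end reconstruction

end WCubicTree

/-- For a matrix of weighted cubic trees whose metrics satisfy the compatibility condition
(invariance of `d^{(ij)}_{kl}` under all permutations of the four indices), the matrix is
symmetric: `M i j` and `M j i` are isomorphic as weighted trees with labeled leaves. -/
theorem planar_matrix_symmetric
    (n : ℕ) (hn : 4 ≤ n)
    (M : ∀ i j : Fin n, i ≠ j → WCubicTree)
    (ℓ : ∀ (i j : Fin n) (h : i ≠ j), Fin n → (M i j h).V)
    (hinj : ∀ (i j : Fin n) (h : i ≠ j) (k l : Fin n),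
      k ≠ i → k ≠ j → l ≠ i → l ≠ j → ℓ i j h k = ℓ i j h l → k = l)
    (hleaf : ∀ (i j : Fin n) (h : i ≠ j) (k : Fin n),
      k ≠ i → k ≠ j → (M i j h).IsLeaf (ℓ i j h k))
    (hsurj : ∀ (i j : Fin n) (h : i ≠ j) (v : (M i j h).V),
      (M i j h).IsLeaf v → ∃ k : Fin n, k ≠ i ∧ k ≠ j ∧ ℓ i j h k = v)
    -- `d i j k l` is the distance in the tree `M i j` between the leaves labeled `k` and `l`
    (d : Fin n → Fin n → Fin n → Fin n → ℝ)
    (hd : ∀ (i j : Fin n) (h : i ≠ j) (k l : Fin n), k ≠ i → k ≠ j → l ≠ i → l ≠ j →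
      d i j k l = (M i j h).dist (ℓ i j h k) (ℓ i j h l))
    -- compatibility: `d i j k l` is invariant under every permutation of the four indices
    (hcompat : ∀ i j k l : Fin n, i ≠ j → i ≠ k → i ≠ l → j ≠ k → j ≠ l → k ≠ l →
      ∀ σ : Equiv.Perm (Fin 4),
        d (![i,j,k,l] (σ 0)) (![i,j,k,l] (σ 1)) (![i,j,k,l] (σ 2)) (![i,j,k,l] (σ 3))
          = d i j k l) :
    ∀ (i j : Fin n) (h : i ≠ j),
      ∃ φ : (M i j h).G ≃g (M j i h.symm).G,
        (∀ k : Fin n, k ≠ i → k ≠ j → φ (ℓ i j h k) = ℓ j i h.symm k) ∧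
        ∀ e ∈ (M i j h).G.edgeSet, (M j i h.symm).w (Sym2.map (⇑φ) e) = (M i j h).w e := by
  intro i j h
  set T1 := M i j h with hT1
  set T2 := M j i h.symm with hT2
  -- index type for leaf labels
  let ι := {k : Fin n // k ≠ i ∧ k ≠ j}
  let L1 : ι → T1.V := fun k => ℓ i j h k.1
  let L2 : ι → T2.V := fun k => ℓ j i h.symm k.1
  have hsurj1 : ∀ v, T1.IsLeaf v → ∃ k : ι, L1 k = v := by
    intro v hv
    obtain ⟨k, hk1, hk2, hk3⟩ := hsurj i j h v hv
    exact ⟨⟨k, hk1, hk2⟩, hk3⟩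
  have hsurj2 : ∀ v, T2.IsLeaf v → ∃ k : ι, L2 k = v := by
    intro v hv
    obtain ⟨k, hk1, hk2, hk3⟩ := hsurj j i h.symm v hv
    exact ⟨⟨k, hk2, hk1⟩, hk3⟩
  -- equality of the leaf metrics
  have hm : ∀ k l : ι, T1.dist (L1 k) (L1 l) = T2.dist (L2 k) (L2 l) := by
    rintro ⟨k, hki, hkj⟩ ⟨l, hli, hlj⟩
    by_cases hkl : k = l
    · subst hkl
      rw [T1.dist_self, T2.dist_self]
    · have h1 := hd i j h k l hki hkj hli hlj
      have h2 := hd j i h.symm k l hkj hki hlj hli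
      have h3 := hcompat i j k l h (Ne.symm hki) (Ne.symm hli) (Ne.symm hkj) (Ne.symm hlj) hkl
        (Equiv.swap 0 1)
      have e0 : (Equiv.swap (0 : Fin 4) 1) 0 = 1 := Equiv.swap_apply_left _ _
      have e1 : (Equiv.swap (0 : Fin 4) 1) 1 = 0 := Equiv.swap_apply_right _ _
      have e2 : (Equiv.swap (0 : Fin 4) 1) 2 = 2 :=
        Equiv.swap_apply_of_ne_of_ne (by decide) (by decide)
      have e3 : (Equiv.swap (0 : Fin 4) 1) 3 = 3 :=
        Equiv.swap_apply_of_ne_of_ne (by decide) (by decide)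
      rw [e0, e1, e2, e3] at h3
      simp only [Matrix.cons_val_zero, Matrix.cons_val_one, Matrix.head_cons,
        Matrix.cons_val_two, Matrix.cons_val_three, Matrix.tail_cons] at h3
      simp only [L1, L2]
      rw [← h1, ← h2, h3]
  have hm' : ∀ k l : ι, T2.dist (L2 k) (L2 l) = T1.dist (L1 k) (L1 l) := fun k l => (hm k l).symm
  -- profile-preserving maps in both directions
  obtain ⟨φ0, hφ0⟩ := Classical.axiomOfChoice
    (WCubicTree.exists_mirror (L1 := L1) (L2 := L2) hsurj1 (fun k => hleaf j i h.symm k.1 k.2.2 k.2.1) hm)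
  obtain ⟨ψ0, hψ0⟩ := Classical.axiomOfChoice
    (WCubicTree.exists_mirror (L1 := L2) (L2 := L1) hsurj2 (fun k => hleaf i j h k.1 k.2.1 k.2.2) hm')
  -- uniqueness of profiles
  have uniq1 : ∀ x y : T1.V, (∀ k : ι, T1.dist (L1 k) x = T1.dist (L1 k) y) → x = y := by
    intro x y hxy
    apply T1.eq_of_leaf_profile
    intro a hla
    obtain ⟨k, hk⟩ := hsurj1 a hla
    rw [← hk]
    exact hxy k
  have uniq2 : ∀ x y : T2.V, (∀ k : ι, T2.dist (L2 k) x = T2.dist (L2 k) y) → x = y := by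
    intro x y hxy
    apply T2.eq_of_leaf_profile
    intro a hla
    obtain ⟨k, hk⟩ := hsurj2 a hla
    rw [← hk]
    exact hxy k
  have hψφ : ∀ v, ψ0 (φ0 v) = v := by
    intro v
    apply uniq1
    intro k
    rw [hψ0 (φ0 v) k, hφ0 v k]
  have hφψ : ∀ v, φ0 (ψ0 v) = v := by
    intro v
    apply uniq2
    intro k
    rw [hφ0 (ψ0 v) k, hψ0 v k]
  -- distance preservation
  have le12 := WCubicTree.mirror_le (L1 := L1) (L2 := L2) hsurj1 hm φ0 hφ0
  have le21 := WCubicTree.mirror_le (L1 := L2) (L2 := L1) hsurj2 hm' ψ0 hψ0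
  have hdist : ∀ u v, T2.dist (φ0 u) (φ0 v) = T1.dist u v := by
    intro u v
    have h1 := le12 u v
    have h2 := le21 (φ0 u) (φ0 v)
    rw [hψφ, hψφ] at h2
    linarith
  -- the equivalence
  let E : T1.V ≃ T2.V := ⟨φ0, ψ0, hψφ, hφψ⟩
  have hadj : ∀ u v : T1.V, T2.G.Adj (φ0 u) (φ0 v) ↔ T1.G.Adj u v := by
    intro u v
    rw [T1.adj_iff_metric, T2.adj_iff_metric]
    constructor
    · rintro ⟨hne2, hz2⟩
      refine ⟨fun e => hne2 (by rw [e]), fun z hzB => ?_⟩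
      have hz' : T2.dist (φ0 u) (φ0 z) + T2.dist (φ0 z) (φ0 v) = T2.dist (φ0 u) (φ0 v) := by
        rw [hdist, hdist, hdist]
        exact hzB
      rcases hz2 _ hz' with hh | hh
      · left
        have := congrArg ψ0 hh
        rwa [hψφ, hψφ] at this
      · right
        have := congrArg ψ0 hh
        rwa [hψφ, hψφ] at this
    · rintro ⟨hne1, hz1⟩
      refine ⟨fun e => hne1 ?_, fun z hzB => ?_⟩
      · have := congrArg ψ0 e
        rwa [hψφ, hψφ] at this
      · have hzeq : φ0 (ψ0 z) = z := hφψ z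
        have hz' : T1.dist u (ψ0 z) + T1.dist (ψ0 z) v = T1.dist u v := by
          rw [← hdist, ← hdist, ← hdist, hzeq]
          exact hzB
        rcases hz1 _ hz' with hh | hh
        · left
          rw [← hzeq, hh]
        · right
          rw [← hzeq, hh]
  refine ⟨⟨E, ?_⟩, ?_, ?_⟩
  · intro u v
    exact hadj u v
  · intro k hki hkj
    apply uniq2
    intro k'
    show T2.dist (L2 k') (φ0 (L1 ⟨k, hki, hkj⟩)) = T2.dist (L2 k') (L2 ⟨k, hki, hkj⟩)
    rw [hφ0, hm]
  · intro e he
    induction e with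
    | _ u v =>
      rw [SimpleGraph.mem_edgeSet] at he
      have hadj2 : T2.G.Adj (φ0 u) (φ0 v) := (hadj u v).mpr he
      have : Sym2.map (⇑(⟨E, fun {u v} => hadj u v⟩ : T1.G ≃g T2.G)) s(u, v) = s(φ0 u, φ0 v) := rfl
      rw [this, ← T2.dist_adj hadj2, ← T1.dist_adj he, hdist]
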